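/- Let n be even and sufficiently large, and let k = ⌈√n / log log n⌉, so that 2k ≤ n. Let M*_0 ∈ [0,1]^{n×n} be the matrix whose top-right k×k submatrix (rows 1,…,k and columns n−k+1,…,n) is all ones, whose bottom-left k×k submatrix (rows n−k+1,…,n and columns 1,…,k) is all zeros, and all of whose other entries equal 1/2. For a permutation π of [n/2], let P_π(M*_0) be the matrix obtained from M*_0 by applying π simultaneously to its first n/2 rows, to its last n/2 rows, to its first n/2 columns, and to its last n/2 columns, and set C_PC = {P_π(M*_0) : π a permutation of [n/2]}. There is a universal constant c > 0 such that: if an estimator M̂ = M̂(Y) satisfies sup over M* ∈ C_PC ∪ {(1/2)·11ᵀ} of E‖M̂ − M*‖²_F ≤ c·k·√n / log n, then the test which declares 'M* = (1/2)·11ᵀ' when ‖M̂ − (1/2)·11ᵀ‖²_F ≤ k²/16 and declares 'M* ∈ C_PC' otherwise is correct with probability at least 1 − 1/√(log n), both when Y is generated from M* = (1/2)·11ᵀ and when Y is generated from any M* ∈ C_PC. -/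

import Mathlib

open MeasureTheory ENNReal

noncomputable section

namespace SSTPaper

/-- Squared Frobenius norm of an `n × n` real matrix (as a function). -/
def frobSq {n : ℕ} (A : Fin n → Fin n → ℝ) : ℝ := ∑ i, ∑ j, (A i j) ^ 2

/-- Trace inner product `⟨A, B⟩ = trace (Aᵀ B)`. -/
def tinner {n : ℕ} (A B : Fin n → Fin n → ℝ) : ℝ := ∑ i, ∑ j, A i j * B i j

/-- The SST class: shifted-skew-symmetric matrices with entries in `[0,1]` that are
`π`-SST for some permutation `π` (where `π` ranks `i` above `j` iff `π j < π i`). -/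
def sstClass (n : ℕ) : Set (Fin n → Fin n → ℝ) :=
  {M | (∀ i j, 0 ≤ M i j ∧ M i j ≤ 1) ∧ (∀ i j, M j i = 1 - M i j) ∧
    ∃ π : Equiv.Perm (Fin n), ∀ i j k : Fin n, π j < π i → M j k ≤ M i k}

/-- The set of SST matrices faithful to a given permutation `π`. -/
def sstOf {n : ℕ} (π : Equiv.Perm (Fin n)) : Set (Fin n → Fin n → ℝ) :=
  {M | (∀ i j, 0 ≤ M i j ∧ M i j ≤ 1) ∧ (∀ i j, M j i = 1 - M i j) ∧
    ∀ i j k : Fin n, π j < π i → M j k ≤ M i k}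

/-- Size of the largest indifference set of `M`: the maximal number of identical rows. -/
def kmaxM {n : ℕ} (M : Fin n → Fin n → ℝ) : ℕ :=
  Finset.univ.sup fun i => Set.ncard {j : Fin n | M j = M i}

/-- Number of indifference sets of `M`: the number of distinct rows. -/
def numSets {n : ℕ} (M : Fin n → Fin n → ℝ) : ℕ := Set.ncard (Set.range M)

/-- SST matrices having an indifference set of size at least `k`. -/
def sstClassK (n k : ℕ) : Set (Fin n → Fin n → ℝ) :=
  {M | M ∈ sstClass n ∧ k ≤ kmaxM M}

/-- SST matrices that respect some indifference-set partition of sizes `k`. -/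
def sstClassPart (n s : ℕ) (k : Fin s → ℕ) : Set (Fin n → Fin n → ℝ) :=
  {M | M ∈ sstClass n ∧ ∃ P : Fin s → Finset (Fin n),
    (∀ a b, a ≠ b → Disjoint (P a) (P b)) ∧ (∀ a, (P a).card = k a) ∧
    (∀ i : Fin n, ∃ a, i ∈ P a) ∧
    ∀ a b : Fin s, ∀ i ∈ P a, ∀ i' ∈ P a, ∀ j ∈ P b, ∀ j' ∈ P b, M i j = M i' j'}

/-- Bernoulli measure on `Bool` with success probability `p`. -/
def bern (p : ℝ) : Measure Bool :=
  (ENNReal.ofReal p) • Measure.dirac true + (ENNReal.ofReal (1 - p)) • Measure.dirac false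

/-- The law of the observation matrix `Y`: entries on and above the diagonal independent,
`P[Y i j = 1] = M i j` for `i < j`, `Y j i = 1 - Y i j` off the diagonal, and fair coin
on the diagonal. -/
def obsMeasure {n : ℕ} (M : Fin n → Fin n → ℝ) : Measure (Fin n → Fin n → ℝ) :=
  Measure.map (fun (ω : Fin n × Fin n → Bool) (i j : Fin n) =>
      if i < j then (if ω (i, j) then (1 : ℝ) else 0)
      else if j < i then 1 - (if ω (j, i) then (1 : ℝ) else 0)
      else (if ω (i, j) then (1 : ℝ) else 0))
    (Measure.pi fun p : Fin n × Fin n => bern (if p.1 = p.2 then 1 / 2 else M p.1 p.2))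

/-- The risk `E ‖M̂(Y) − M*‖²_F` of an estimator. -/
def risk {n : ℕ} (Mhat : (Fin n → Fin n → ℝ) → Fin n → Fin n → ℝ)
    (Mstar : Fin n → Fin n → ℝ) : ℝ≥0∞ :=
  ∫⁻ Y, ENNReal.ofReal (frobSq (Mhat Y - Mstar)) ∂(obsMeasure Mstar)

/-- The `(s, k)`-oracle risk. -/
def oracleRisk (n s : ℕ) (k : Fin s → ℕ) : ℝ≥0∞ :=
  ⨅ (Mhat : (Fin n → Fin n → ℝ) → Fin n → Fin n → ℝ) (_ : Measurable Mhat),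
    ⨆ (Mstar : Fin n → Fin n → ℝ) (_ : Mstar ∈ sstClassPart n s k), risk Mhat Mstar

/-- The global adaptivity index of an estimator. -/
def adaptIndex {n : ℕ} (Mhat : (Fin n → Fin n → ℝ) → Fin n → Fin n → ℝ) : ℝ≥0∞ :=
  ⨆ (s : ℕ) (k : Fin s → ℕ) (_ : ∀ a, 1 ≤ k a) (_ : ∑ a, k a = n) (_ : ∀ a, k a < n),
    (⨆ (Mstar : Fin n → Fin n → ℝ) (_ : Mstar ∈ sstClassPart n s k), risk Mhat Mstar) /
      oracleRisk n s k

/-- Number of wins of item `i`. -/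
def winCount {n : ℕ} (Y : Fin n → Fin n → ℝ) (i : Fin n) : ℝ := ∑ j, Y i j

instance {n : ℕ} : MeasurableSpace (Equiv.Perm (Fin n)) := ⊤

/-- Uniform measure on a (finite) set. -/
def unifOn {α : Type*} [Fintype α] [MeasurableSpace α] (s : Set α) : Measure α :=
  (s.ncard : ℝ≥0∞)⁻¹ • ∑ a ∈ (Set.toFinite s).toFinset, Measure.dirac a

/-- Apply a permutation `π` of `Fin m` simultaneously to the first half and the second
half of `Fin (m + m)`. -/
def liftPerm (m : ℕ) (π : Equiv.Perm (Fin m)) : Equiv.Perm (Fin (m + m)) :=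
  (finSumFinEquiv.symm.trans ((π.sumCongr π).trans finSumFinEquiv))

/-- The base planted-clique matrix `M*₀` with an all-ones `k × k` top-right block, an
all-zeros `k × k` bottom-left block, and all remaining entries `1/2` (here `n = m + m`). -/
def plantedBase (m k : ℕ) : Fin (m + m) → Fin (m + m) → ℝ := fun i j =>
  if (i : ℕ) < k ∧ m + m - k ≤ (j : ℕ) then 1
  else if m + m - k ≤ (i : ℕ) ∧ (j : ℕ) < k then 0
  else 1 / 2

/-- The planted-clique class `C_PC = {P_π(M*₀) : π a permutation of [n/2]}`. -/
def plantedClass (m k : ℕ) : Set (Fin (m + m) → Fin (m + m) → ℝ) :=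
  {A | ∃ π : Equiv.Perm (Fin m),
    A = fun i j => plantedBase m k (liftPerm m π i) (liftPerm m π j)}

lemma bern_prob {p : ℝ} (h0 : 0 ≤ p) (h1 : p ≤ 1) : IsProbabilityMeasure (bern p) := by
  constructor
  simp only [bern, Measure.add_apply, Measure.smul_apply, smul_eq_mul,
    MeasureTheory.measure_univ, mul_one]
  rw [← ENNReal.ofReal_add h0 (by linarith)]
  norm_num

lemma lintegral_comp_map_le {Ω β : Type*} [MeasurableSpace Ω] [MeasurableSpace β]
    [MeasurableSingletonClass β] [Fintype Ω] (ν : Measure Ω) {f : Ω → β}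
    (hf : Measurable f) (h : β → ℝ≥0∞) :
    ∫⁻ ω, h (f ω) ∂ν ≤ ∫⁻ y, h y ∂(ν.map f) := by
  classical
  set F : Finset β := Finset.univ.image f with hF
  set φ : β → ℝ≥0∞ := fun z => ∑ y ∈ F, Set.indicator {y} (fun _ => h y) z with hφ
  have key : ∀ z, φ z = if z ∈ F then h z else 0 := by
    intro z
    simp only [hφ, Set.indicator_apply, Set.mem_singleton_iff]
    exact Finset.sum_ite_eq F z (fun y => h y)
  have hφmeas : Measurable φ :=
    Finset.measurable_sum _ fun y _ => measurable_const.indicator (measurableSet_singleton y)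
  calc ∫⁻ ω, h (f ω) ∂ν = ∫⁻ ω, φ (f ω) ∂ν := by
        refine lintegral_congr fun ω => ?_
        rw [key (f ω), if_pos (Finset.mem_image_of_mem f (Finset.mem_univ ω))]
    _ = ∫⁻ z, φ z ∂(ν.map f) := (lintegral_map hφmeas hf).symm
    _ ≤ ∫⁻ z, h z ∂(ν.map f) := by
        refine lintegral_mono fun z => ?_
        rw [key z]; split <;> simp

lemma test_bound {Ω β : Type*} [Fintype Ω] [MeasurableSpace Ω] [DiscreteMeasurableSpace Ω]
    [MeasurableSpace β] [MeasurableSingletonClass β]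
    (ν : Measure Ω) [IsProbabilityMeasure ν] {f : Ω → β} (hf : Measurable f)
    (g : β → ℝ) {a δ B : ℝ} (ha : 0 < a) (hδ0 : 0 ≤ δ)
    (hB : ∫⁻ y, ENNReal.ofReal (g y) ∂(ν.map f) ≤ ENNReal.ofReal B)
    (hBa : B / a ≤ δ) (S : Set β) (hS : ∀ y, y ∉ S → a ≤ g y) :
    ENNReal.ofReal (1 - δ) ≤ (ν.map f) S := by
  classical
  have h1 : ∫⁻ ω, ENNReal.ofReal (g (f ω)) ∂ν ≤ ENNReal.ofReal B :=
    (lintegral_comp_map_le ν hf _).trans hB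
  set bad : Set Ω := {ω | a ≤ g (f ω)} with hbaddef
  have hmeas : MeasurableSet bad := .of_discrete
  have markov : ν bad * ENNReal.ofReal a ≤ ENNReal.ofReal B := by
    have : ∫⁻ ω, bad.indicator (fun _ => ENNReal.ofReal a) ω ∂ν
        ≤ ∫⁻ ω, ENNReal.ofReal (g (f ω)) ∂ν := by
      refine lintegral_mono fun ω => ?_
      by_cases hω : ω ∈ bad
      · simpa [Set.indicator_of_mem hω] using ENNReal.ofReal_le_ofReal hω
      · simp [Set.indicator_of_notMem hω]
    rw [lintegral_indicator hmeas, setLIntegral_const, mul_comm] at this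
    exact this.trans h1
  have hbad : ν bad ≤ ENNReal.ofReal δ := by
    have h2 : ν bad ≤ ENNReal.ofReal B / ENNReal.ofReal a := by
      rw [ENNReal.le_div_iff_mul_le (Or.inl (by simp [ENNReal.ofReal_eq_zero]; linarith))
        (Or.inl ENNReal.ofReal_ne_top)]
      exact markov
    calc ν bad ≤ ENNReal.ofReal B / ENNReal.ofReal a := h2
      _ = ENNReal.ofReal (B / a) := (ENNReal.ofReal_div_of_pos ha).symm
      _ ≤ ENNReal.ofReal δ := ENNReal.ofReal_le_ofReal hBa
  have hsub : ν (f ⁻¹' S)ᶜ ≤ ν bad := by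
    refine measure_mono fun ω hω => hS (f ω) hω
  have hpre : ENNReal.ofReal (1 - δ) ≤ ν (f ⁻¹' S) := by
    have hcompl : ν (f ⁻¹' S) = 1 - ν (f ⁻¹' S)ᶜ := by
      have := prob_compl_eq_one_sub (μ := ν) (MeasurableSet.of_discrete (s := f ⁻¹' S)).compl
      rw [compl_compl] at this
      rw [this]
    rw [hcompl]
    have step1 : 1 - ENNReal.ofReal δ ≤ 1 - ν (f ⁻¹' S)ᶜ :=
      tsub_le_tsub_left (hsub.trans hbad) 1
    refine le_trans ?_ step1
    by_cases hδ1 : δ ≤ 1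
    · refine ENNReal.le_sub_of_add_le_right ENNReal.ofReal_ne_top ?_
      rw [← ENNReal.ofReal_add (by linarith) hδ0]
      simp
    · simp [ENNReal.ofReal_eq_zero.2 (by linarith : 1 - δ ≤ 0)]
  exact hpre.trans (Measure.le_map_apply hf.aemeasurable S)

lemma log_le_sqrt {t : ℝ} (ht : 0 < t) : Real.log t ≤ Real.sqrt t := by
  set s := Real.sqrt t with hs
  have hs0 : 0 < s := Real.sqrt_pos.2 ht
  have ht' : t = s ^ 2 := (Real.sq_sqrt ht.le).symm
  have hlog2 : Real.log t = 2 * Real.log s := by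
    rw [ht', Real.log_pow]; push_cast; ring
  have hlogs : Real.log s ≤ s / Real.exp 1 := by
    have h1 : Real.log (s / Real.exp 1) = Real.log s - 1 := by
      rw [Real.log_div hs0.ne' (Real.exp_ne_zero 1), Real.log_exp]
    have h2 : Real.log (s / Real.exp 1) ≤ s / Real.exp 1 - 1 :=
      Real.log_le_sub_one_of_pos (div_pos hs0 (Real.exp_pos 1))
    linarith [h1 ▸ h2]
  have he : (2:ℝ) ≤ Real.exp 1 := by
    have := Real.exp_one_gt_d9; nlinarith
  have hexp_pos := Real.exp_pos 1
  rw [hlog2]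
  have : s / Real.exp 1 ≤ s / 2 := by
    apply div_le_div_of_nonneg_left hs0.le (by norm_num) he
  linarith
lemma count_lt (n k : ℕ) (hk : k ≤ n) :
    ∑ i : Fin n, (if (i : ℕ) < k then (1:ℝ) else 0) = k := by
  classical
  rw [Fin.sum_univ_eq_sum_range (fun t => if t < k then (1:ℝ) else 0)]
  rw [Finset.sum_boole]
  congr 1
  have : (Finset.range n).filter (fun t => t < k) = Finset.range k := by
    ext t; simp only [Finset.mem_filter, Finset.mem_range]; omega
  rw [this]
  simp

lemma count_ge (n k : ℕ) (hk : k ≤ n) :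
    ∑ j : Fin n, (if n - k ≤ (j : ℕ) then (1:ℝ) else 0) = k := by
  classical
  rw [Fin.sum_univ_eq_sum_range (fun t => if n - k ≤ t then (1:ℝ) else 0)]
  rw [Finset.sum_boole]
  congr 1
  have : (Finset.range n).filter (fun t => n - k ≤ t) = Finset.Ico (n - k) n := by
    ext t; simp only [Finset.mem_filter, Finset.mem_range, Finset.mem_Ico]; omega
  rw [this, Nat.card_Ico]
  omega

lemma planted_lower {m k : ℕ} (hk2 : 2 * k ≤ m + m) :
    ∀ Mstar ∈ plantedClass m k,
      ((k:ℝ) ^ 2) / 4 ≤ frobSq (Mstar - fun _ _ => (1:ℝ)/2) := by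
  classical
  rintro _ ⟨π, rfl⟩
  set σ := liftPerm m π with hσ
  have hkn : k ≤ m + m := by omega
  have hfr : frobSq ((fun i j => plantedBase m k (σ i) (σ j)) - fun _ _ => (1:ℝ)/2)
      = ∑ i, ∑ j, (plantedBase m k (σ i) (σ j) - 1/2) ^ 2 := by
    simp [frobSq]
  rw [hfr]
  have hre : ∑ i, ∑ j, (plantedBase m k (σ i) (σ j) - 1/2) ^ 2
      = ∑ i, ∑ j, (plantedBase m k i j - 1/2) ^ 2 := by
    rw [← Equiv.sum_comp σ (fun i' => ∑ j, (plantedBase m k i' j - 1/2) ^ 2)]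
    refine Finset.sum_congr rfl fun i _ => ?_
    exact Equiv.sum_comp σ (fun j' => (plantedBase m k (σ i) j' - 1/2) ^ 2)
  rw [hre]
  have hterm : ∀ i j : Fin (m + m),
      (if (i:ℕ) < k ∧ m + m - k ≤ (j:ℕ) then (1/4 : ℝ) else 0)
        ≤ (plantedBase m k i j - 1/2) ^ 2 := by
    intro i j
    unfold plantedBase
    split_ifs <;> norm_num
  calc ((k:ℝ) ^ 2) / 4
      = (∑ i : Fin (m+m), (if (i:ℕ) < k then (1:ℝ) else 0)) *
        (∑ j : Fin (m+m), (if m + m - k ≤ (j:ℕ) then (1/4:ℝ) else 0)) := by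
        have h2 : ∑ j : Fin (m+m), (if m + m - k ≤ (j:ℕ) then (1/4:ℝ) else 0)
            = (k:ℝ) / 4 := by
          have : ∀ j : Fin (m+m), (if m + m - k ≤ (j:ℕ) then (1/4:ℝ) else 0)
              = (1/4) * (if m + m - k ≤ (j:ℕ) then (1:ℝ) else 0) := by
            intro j; split_ifs <;> ring
          rw [Finset.sum_congr rfl fun j _ => this j, ← Finset.mul_sum,
            count_ge (m+m) k hkn]
          ring
        rw [count_lt (m+m) k hkn, h2]
        ring
    _ = ∑ i : Fin (m+m), ∑ j : Fin (m+m),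
        (if (i:ℕ) < k ∧ m + m - k ≤ (j:ℕ) then (1/4:ℝ) else 0) := by
        rw [Finset.sum_mul_sum]
        refine Finset.sum_congr rfl fun i _ => Finset.sum_congr rfl fun j _ => ?_
        by_cases h1 : (i:ℕ) < k <;> by_cases h2 : m + m - k ≤ (j:ℕ) <;>
          simp [h1, h2]
    _ ≤ ∑ i, ∑ j, (plantedBase m k i j - 1/2) ^ 2 :=
        Finset.sum_le_sum fun i _ => Finset.sum_le_sum fun j _ => hterm i j

lemma frob_tri {n : ℕ} (X M H : Fin n → Fin n → ℝ) :
    frobSq (M - H) ≤ 2 * frobSq (X - M) + 2 * frobSq (X - H) := by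
  unfold frobSq
  simp only [Pi.sub_apply]
  rw [Finset.mul_sum, Finset.mul_sum, ← Finset.sum_add_distrib]
  refine Finset.sum_le_sum fun i _ => ?_
  rw [Finset.mul_sum, Finset.mul_sum, ← Finset.sum_add_distrib]
  refine Finset.sum_le_sum fun j _ => ?_
  nlinarith [sq_nonneg (X i j - M i j + (X i j - H i j))]

lemma frobSq_nonneg {n : ℕ} (A : Fin n → Fin n → ℝ) : 0 ≤ frobSq A :=
  Finset.sum_nonneg fun i _ => Finset.sum_nonneg fun j _ => sq_nonneg _

lemma planted_unit {m k : ℕ} : ∀ Mstar ∈ plantedClass m k,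
    ∀ i j, 0 ≤ Mstar i j ∧ Mstar i j ≤ 1 := by
  rintro _ ⟨π, rfl⟩ i j
  simp only [plantedBase]
  constructor <;> (split_ifs <;> norm_num)

/-- for even `n = m + m` sufficiently large and `k = ⌈√n / log log n⌉` (with
`2k ≤ n`), there is a universal constant `c > 0` such that any estimator whose risk over
`C_PC ∪ {½·11ᵀ}` is at most `c k √n / log n` yields, by thresholding
`‖M̂ − ½·11ᵀ‖²_F` at `k²/16`, a test for the planted clique that is correct with
probability at least `1 − 1/√(log n)` under each hypothesis. -/
theorem planted_clique_reduction :
    ∃ c : ℝ, 0 < c ∧ ∃ N : ℕ, ∀ m : ℕ, N ≤ m + m →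
      ∀ k : ℕ,
        k = ⌈Real.sqrt (m + m) / Real.log (Real.log (m + m))⌉₊ →
        2 * k ≤ m + m →
      ∀ Mhat : (Fin (m + m) → Fin (m + m) → ℝ) → Fin (m + m) → Fin (m + m) → ℝ,
        (∀ Mstar : Fin (m + m) → Fin (m + m) → ℝ,
          (Mstar ∈ plantedClass m k ∨ Mstar = fun _ _ => (1 : ℝ) / 2) →
          (∫⁻ Y, ENNReal.ofReal (frobSq (Mhat Y - Mstar)) ∂(obsMeasure Mstar)) ≤
            ENNReal.ofReal (c * k * Real.sqrt (m + m) / Real.log (m + m))) →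
        (ENNReal.ofReal (1 - 1 / Real.sqrt (Real.log (m + m))) ≤
          obsMeasure (fun _ _ => (1 : ℝ) / 2)
            {Y | frobSq (Mhat Y - fun _ _ => (1 : ℝ) / 2) ≤ (k : ℝ) ^ 2 / 16}) ∧
        ∀ Mstar ∈ plantedClass m k,
          ENNReal.ofReal (1 - 1 / Real.sqrt (Real.log (m + m))) ≤
            obsMeasure Mstar
              {Y | ¬ (frobSq (Mhat Y - fun _ _ => (1 : ℝ) / 2) ≤ (k : ℝ) ^ 2 / 16)} := by
  classical
  refine ⟨1/16, by norm_num, 3, ?_⟩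
  intro m hm k hk hk2 Mhat hrisk
  -- basic real facts
  have hn3 : (3:ℝ) ≤ ((m:ℝ) + (m:ℝ)) := by exact_mod_cast hm
  have hnpos : (0:ℝ) < ((m:ℝ) + (m:ℝ)) := by linarith
  have hlog1 : 1 < Real.log ((m:ℝ) + (m:ℝ)) := by
    rw [Real.lt_log_iff_exp_lt hnpos]
    nlinarith [Real.exp_one_lt_d9]
  have hlogpos : 0 < Real.log ((m:ℝ) + (m:ℝ)) := by linarith
  have hLL : 0 < Real.log (Real.log ((m:ℝ) + (m:ℝ))) := Real.log_pos hlog1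
  have hsqn : 0 < Real.sqrt ((m:ℝ) + (m:ℝ)) := Real.sqrt_pos.2 hnpos
  have hk1 : 1 ≤ k := by
    rw [hk]
    exact Nat.one_le_iff_ne_zero.2 (by
      simp only [ne_eq, Nat.ceil_eq_zero, not_le]
      exact div_pos hsqn hLL)
  have hkR : (1:ℝ) ≤ (k:ℝ) := by exact_mod_cast hk1
  have hklb : Real.sqrt ((m:ℝ) + (m:ℝ)) / Real.log (Real.log ((m:ℝ) + (m:ℝ))) ≤ (k:ℝ) := by
    rw [hk]; exact Nat.le_ceil _
  have hsqlog : 0 < Real.sqrt (Real.log ((m:ℝ) + (m:ℝ))) := Real.sqrt_pos.2 hlogpos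
  have hδ0 : 0 ≤ 1 / Real.sqrt (Real.log ((m:ℝ) + (m:ℝ))) := by positivity
  have ha : (0:ℝ) < (k:ℝ)^2/16 := by positivity
  -- the key numeric inequality
  have hkey : (1/16 * (k:ℝ) * Real.sqrt ((m:ℝ) + (m:ℝ)) / Real.log ((m:ℝ) + (m:ℝ))) /
      ((k:ℝ)^2/16) ≤ 1 / Real.sqrt (Real.log ((m:ℝ) + (m:ℝ))) := by
    have hk0 : (0:ℝ) < (k:ℝ) := by linarith
    have hLHS : (1/16 * (k:ℝ) * Real.sqrt ((m:ℝ) + (m:ℝ)) / Real.log ((m:ℝ) + (m:ℝ))) /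
        ((k:ℝ)^2/16) = Real.sqrt ((m:ℝ) + (m:ℝ)) / ((k:ℝ) * Real.log ((m:ℝ) + (m:ℝ))) := by
      field_simp
    rw [hLHS]
    have h1 : Real.sqrt ((m:ℝ) + (m:ℝ)) ≤ (k:ℝ) * Real.log (Real.log ((m:ℝ) + (m:ℝ))) := by
      rw [div_le_iff₀ hLL] at hklb; linarith
    have h2 : Real.sqrt ((m:ℝ) + (m:ℝ)) / ((k:ℝ) * Real.log ((m:ℝ) + (m:ℝ))) ≤
        Real.log (Real.log ((m:ℝ) + (m:ℝ))) / Real.log ((m:ℝ) + (m:ℝ)) := by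
      rw [div_le_div_iff₀ (by positivity) hlogpos]
      nlinarith
    refine h2.trans ?_
    rw [div_le_div_iff₀ hlogpos hsqlog]
    have h3 : Real.log (Real.log ((m:ℝ) + (m:ℝ))) ≤ Real.sqrt (Real.log ((m:ℝ) + (m:ℝ))) :=
      log_le_sqrt hlogpos
    have h4 : Real.sqrt (Real.log ((m:ℝ) + (m:ℝ))) * Real.sqrt (Real.log ((m:ℝ) + (m:ℝ)))
        = Real.log ((m:ℝ) + (m:ℝ)) := Real.mul_self_sqrt hlogpos.le
    nlinarith
  constructor
  · -- null hypothesis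
    haveI : ∀ p : Fin (m+m) × Fin (m+m),
        IsProbabilityMeasure (bern (if p.1 = p.2 then 1/2 else
          (fun _ _ => (1:ℝ)/2) p.1 p.2)) := fun p =>
      bern_prob (by split_ifs <;> norm_num) (by split_ifs <;> norm_num)
    have hobs : obsMeasure (fun _ _ => (1:ℝ)/2) =
        Measure.map (fun (ω : Fin (m+m) × Fin (m+m) → Bool) (i j : Fin (m+m)) =>
          if i < j then (if ω (i, j) then (1 : ℝ) else 0)
          else if j < i then 1 - (if ω (j, i) then (1 : ℝ) else 0)
          else (if ω (i, j) then (1 : ℝ) else 0))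
        (Measure.pi fun p : Fin (m+m) × Fin (m+m) =>
          bern (if p.1 = p.2 then 1 / 2 else (fun _ _ => (1:ℝ)/2) p.1 p.2)) := rfl
    rw [hobs]
    refine test_bound _ Measurable.of_discrete
      (fun Y => frobSq (Mhat Y - fun _ _ => (1:ℝ)/2)) ha hδ0 ?_ hkey _ ?_
    · have h := hrisk _ (Or.inr rfl)
      rw [hobs] at h
      exact h
    · intro y hy
      simp only [Set.mem_setOf_eq] at hy
      exact (not_le.1 hy).le
  · -- alternative hypothesis
    intro Mstar hMstar
    have hunit := planted_unit Mstar hMstar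
    haveI : ∀ p : Fin (m+m) × Fin (m+m),
        IsProbabilityMeasure (bern (if p.1 = p.2 then 1/2 else Mstar p.1 p.2)) := fun p =>
      bern_prob (by split_ifs with h; exacts [by norm_num, (hunit p.1 p.2).1])
        (by split_ifs with h; exacts [by norm_num, (hunit p.1 p.2).2])
    have hobs : obsMeasure Mstar =
        Measure.map (fun (ω : Fin (m+m) × Fin (m+m) → Bool) (i j : Fin (m+m)) =>
          if i < j then (if ω (i, j) then (1 : ℝ) else 0)
          else if j < i then 1 - (if ω (j, i) then (1 : ℝ) else 0)
          else (if ω (i, j) then (1 : ℝ) else 0))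
        (Measure.pi fun p : Fin (m+m) × Fin (m+m) =>
          bern (if p.1 = p.2 then 1 / 2 else Mstar p.1 p.2)) := rfl
    rw [hobs]
    refine test_bound _ Measurable.of_discrete
      (fun Y => frobSq (Mhat Y - Mstar)) ha hδ0 ?_ hkey _ ?_
    · have h := hrisk _ (Or.inl hMstar)
      rw [hobs] at h
      exact h
    · intro y hy
      simp only [Set.mem_setOf_eq, not_not] at hy
      have h1 := planted_lower hk2 Mstar hMstar
      have h2 := frob_tri (Mhat y) Mstar (fun _ _ => (1:ℝ)/2)
      linarith

end SSTPaper
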